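/- Let u_1, ..., u_m ∈ ℝ^n be pairwise orthogonal unit vectors, A a symmetric n×n matrix, b ∈ ℝ^m, and λ > 0. Define G = ∑_{i=1}^m u_i u_i^⊤ λ sinh(λ(u_i^⊤ A u_i − b_i)). Then (1/λ^2)‖G‖_F^2 ≥ (1/m)(∑_{i=1}^m cosh(λ(u_i^⊤ A u_i − b_i)) − m)^2. -/
import Mathlib


open Matrix

lemma cosh_sub_one_sq_le_sinh_sq (x : ℝ) :
    (Real.cosh x - 1) ^ 2 ≤ Real.sinh x ^ 2 := by
  have h1 : 1 ≤ Real.cosh x := Real.one_le_cosh x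
  have h2 : Real.cosh x ^ 2 = Real.sinh x ^ 2 + 1 := Real.cosh_sq x
  nlinarith

lemma frob_eq {m n : ℕ} (u : Fin m → Fin n → ℝ)
    (horth : ∀ i j, i ≠ j → u i ⬝ᵥ u j = 0) (hunit : ∀ i, u i ⬝ᵥ u i = 1)
    (c : Fin m → ℝ) :
    (∑ a, ∑ b, (∑ i, c i * (u i a * u i b)) ^ 2) = ∑ i, c i ^ 2 := by
  have expand : (∑ a, ∑ b, (∑ i, c i * (u i a * u i b)) ^ 2)
      = ∑ i, ∑ j, ∑ a, ∑ b, (c i * (u i a * u i b)) * (c j * (u j a * u j b)) := by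
    simp_rw [sq, Finset.sum_mul_sum]
    conv_lhs => enter [2, a]; rw [Finset.sum_comm]
    rw [Finset.sum_comm]
    conv_lhs => enter [2, i, 2, a]; rw [Finset.sum_comm]
    conv_lhs => enter [2, i]; rw [Finset.sum_comm]
  rw [expand]
  have inner : ∀ i j : Fin m, (∑ a, ∑ b, (c i * (u i a * u i b)) * (c j * (u j a * u j b)))
      = (c i * c j) * ((u i ⬝ᵥ u j) * (u i ⬝ᵥ u j)) := by
    intro i j
    simp only [dotProduct]
    rw [Finset.sum_mul_sum, Finset.mul_sum]
    apply Finset.sum_congr rfl; intro a _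
    rw [Finset.mul_sum]
    apply Finset.sum_congr rfl; intro b _
    ring
  simp_rw [inner]
  apply Finset.sum_congr rfl; intro i _
  rw [Finset.sum_eq_single i]
  · rw [hunit i]; ring
  · intro j _ hj
    rw [horth i j (Ne.symm hj)]; ring
  · intro h; exact absurd (Finset.mem_univ i) h

theorem gradient_norm_lower_bound {m n : ℕ} (u : Fin m → Fin n → ℝ)
    (horth : ∀ i j, i ≠ j → u i ⬝ᵥ u j = 0) (hunit : ∀ i, u i ⬝ᵥ u i = 1)
    (A : Matrix (Fin n) (Fin n) ℝ) (hA : A.IsSymm) (b : Fin m → ℝ)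
    (lam : ℝ) (hlam : 0 < lam)
    (G : Matrix (Fin n) (Fin n) ℝ)
    (hG : G = ∑ i, (lam * Real.sinh (lam * (u i ⬝ᵥ A.mulVec (u i) - b i))) •
      vecMulVec (u i) (u i)) :
    (1 / lam ^ 2) * (∑ a, ∑ c, G a c ^ 2) ≥
      (1 / m) * ((∑ i, Real.cosh (lam * (u i ⬝ᵥ A.mulVec (u i) - b i))) - m) ^ 2 := by
  set s : Fin m → ℝ := fun i => lam * (u i ⬝ᵥ A.mulVec (u i) - b i) with hs
  set cc : Fin m → ℝ := fun i => lam * Real.sinh (s i) with hcc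
  have hGab : ∀ a c : Fin n, G a c = ∑ i, cc i * (u i a * u i c) := by
    intro a c
    rw [hG]
    simp only [Matrix.sum_apply, Matrix.smul_apply, vecMulVec_apply, smul_eq_mul,
      mul_assoc, hcc, hs]
  have hfrob : (∑ a, ∑ c, G a c ^ 2) = ∑ i, cc i ^ 2 := by
    simp_rw [hGab]
    exact frob_eq u horth hunit cc
  rw [hfrob]
  have hlhs : (1 / lam ^ 2) * (∑ i, cc i ^ 2) = ∑ i, Real.sinh (s i) ^ 2 := by
    rw [Finset.mul_sum]
    apply Finset.sum_congr rfl; intro i _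
    field_simp [hcc]
    ring
  rw [hlhs]
  rcases Nat.eq_zero_or_pos m with hm | hm
  · subst hm; simp
  have hCS : ((∑ i, (Real.cosh (s i) - 1)) ^ 2) ≤ (m : ℝ) * ∑ i, (Real.cosh (s i) - 1) ^ 2 := by
    have := sq_sum_le_card_mul_sum_sq (s := Finset.univ)
      (f := fun i : Fin m => Real.cosh (s i) - 1)
    simpa using this
  have hsum : (∑ i, (Real.cosh (s i) - 1)) = (∑ i, Real.cosh (s i)) - m := by
    rw [Finset.sum_sub_distrib]
    simp
  have hstep : (∑ i, (Real.cosh (s i) - 1) ^ 2) ≤ ∑ i, Real.sinh (s i) ^ 2 :=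
    Finset.sum_le_sum fun i _ => cosh_sub_one_sq_le_sinh_sq (s i)
  have hmpos : (0:ℝ) < m := by exact_mod_cast hm
  rw [ge_iff_le, div_mul_eq_mul_div, div_le_iff₀ hmpos, one_mul]
  calc ((∑ i, Real.cosh (s i)) - (m:ℝ)) ^ 2
      = (∑ i, (Real.cosh (s i) - 1)) ^ 2 := by rw [hsum]
    _ ≤ (m:ℝ) * ∑ i, (Real.cosh (s i) - 1) ^ 2 := hCS
    _ ≤ (∑ i, Real.sinh (s i) ^ 2) * m := by
        rw [mul_comm]; exact mul_le_mul_of_nonneg_right hstep hmpos.le
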